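/- arXiv:2401.17077 — 7 statements merged into one kernel-verified Lean document; each statement's English description precedes it below -/
import Mathlib

section
/- Under the stated hypotheses, for every t ∈ [0, τ] one has log λ(t) ≤ B_β · B_W + ‖G(0)‖ · L_x · t · exp(L_G · L_x · t); that is, z(t) + ⟨β, W⟩ ≤ B_β · B_W + ‖G(0)‖ · L_x · t · exp(L_G · L_x · t). -/
open scoped RealInnerProductSpace

lemma gronwall_aux (K ε x : ℝ) (hK : 0 ≤ K) (hε : 0 ≤ ε) (hx : 0 ≤ x) :
    gronwallBound 0 K ε x ≤ ε * x * Real.exp (K * x) := by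
  rcases eq_or_lt_of_le hK with hK0 | hK0
  · rw [← hK0, gronwallBound_K0]
    simp
  · rw [gronwallBound_of_K_ne_0 hK0.ne']
    have hy : 0 ≤ K * x := mul_nonneg hK0.le hx
    have h1 : Real.exp (K * x) - 1 ≤ (K * x) * Real.exp (K * x) := by
      have h0 := Real.add_one_le_exp (-(K * x))
      have hpos : 0 < Real.exp (K * x) := Real.exp_pos _
      have hmul : Real.exp (-(K * x)) * Real.exp (K * x) = 1 := by
        rw [← Real.exp_add]; simp
      nlinarith
    have : ε / K * (Real.exp (K * x) - 1) ≤ ε / K * ((K * x) * Real.exp (K * x)) := by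
      apply mul_le_mul_of_nonneg_left h1 (div_nonneg hε hK0.le)
    calc 0 * Real.exp (K * x) + ε / K * (Real.exp (K * x) - 1)
        ≤ ε / K * ((K * x) * Real.exp (K * x)) := by linarith
      _ = ε * x * Real.exp (K * x) := by field_simp

/-- Lemma 1 (A bound on the intensity): under the controlled latent state model,
the log intensity `z t + ⟪β, W⟫` is bounded by
`Bβ * BW + ‖G 0‖ * Lx * t * exp (LG * Lx * t)` for all `t ∈ [0, τ]`. -/
theorem intensity_log_bound
    (τ Lx LG Bβ BW : ℝ) (hτ : 0 ≤ τ) (hLx : 0 ≤ Lx) (hLG : 0 ≤ LG)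
    (hBβ : 0 ≤ Bβ) (hBW : 0 ≤ BW)
    (d s : ℕ) (hd : 0 < d) (hs : 0 < s)
    (x x' : ℝ → EuclideanSpace ℝ (Fin d))
    (hx : ∀ u ∈ Set.Icc (0:ℝ) τ, HasDerivAt x (x' u) u)
    (hx' : ∀ u ∈ Set.Icc (0:ℝ) τ, ‖x' u‖ ≤ Lx)
    (G : ℝ → EuclideanSpace ℝ (Fin d))
    (hG : ∀ a b : ℝ, ‖G a - G b‖ ≤ LG * ‖a - b‖)
    (z : ℝ → ℝ) (hz0 : z 0 = 0)
    (hz : ∀ u ∈ Set.Icc (0:ℝ) τ, HasDerivAt z ⟪G (z u), x' u⟫ u)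
    (β W : EuclideanSpace ℝ (Fin s)) (hβ : ‖β‖ ≤ Bβ) (hW : ‖W‖ ≤ BW) :
    ∀ t ∈ Set.Icc (0:ℝ) τ,
      z t + ⟪β, W⟫ ≤ Bβ * BW + ‖G 0‖ * Lx * t * Real.exp (LG * Lx * t) := by
  intro t ht
  obtain ⟨ht0, htτ⟩ := ht
  have hsub : Set.Icc (0:ℝ) t ⊆ Set.Icc 0 τ := Set.Icc_subset_Icc le_rfl htτ
  have hcont : ContinuousOn z (Set.Icc 0 t) := fun u hu =>
    ((hz u (hsub hu)).continuousAt).continuousWithinAt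
  have key : ∀ u ∈ Set.Icc (0:ℝ) t,
      ‖z u‖ ≤ gronwallBound 0 (LG * Lx) (‖G 0‖ * Lx) (u - 0) := by
    apply norm_le_gronwallBound_of_norm_deriv_right_le hcont
    · intro u hu
      exact (hz u (hsub (Set.Ico_subset_Icc_self hu))).hasDerivWithinAt
    · simp [hz0]
    · intro u hu
      have hu' := hsub (Set.Ico_subset_Icc_self hu)
      have h1 : ‖G (z u)‖ ≤ ‖G 0‖ + LG * ‖z u‖ := by
        have := hG (z u) 0
        have h2 := norm_sub_norm_le (G (z u)) (G 0)
        simp only [sub_zero] at this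
        linarith
      calc ‖⟪G (z u), x' u⟫‖ ≤ ‖G (z u)‖ * ‖x' u‖ := norm_inner_le_norm _ _
        _ ≤ (‖G 0‖ + LG * ‖z u‖) * Lx :=
            mul_le_mul h1 (hx' u hu') (norm_nonneg _)
              (by positivity)
        _ = LG * Lx * ‖z u‖ + ‖G 0‖ * Lx := by ring
  have hzt : z t ≤ ‖G 0‖ * Lx * t * Real.exp (LG * Lx * t) := by
    have := key t ⟨ht0, le_rfl⟩
    have h2 := gronwall_aux (LG * Lx) (‖G 0‖ * Lx) t (by positivity) (by positivity) ht0
    rw [sub_zero] at this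
    calc z t ≤ ‖z t‖ := le_abs_self _
      _ ≤ gronwallBound 0 (LG * Lx) (‖G 0‖ * Lx) t := this
      _ ≤ ‖G 0‖ * Lx * t * Real.exp (LG * Lx * t) := h2
  have hβW : ⟪β, W⟫ ≤ Bβ * BW := by
    calc ⟪β, W⟫ ≤ ‖β‖ * ‖W‖ := real_inner_le_norm _ _
      _ ≤ Bβ * BW := mul_le_mul hβ hW (norm_nonneg _) hBβ
  linarith
end

section
/- Under the stated hypotheses, for every t ∈ [0, τ] one has ‖z(t)‖ ≤ ‖G(0)‖_op · L_x · t · exp(L_G · L_x · t). -/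
/-- A-priori Grönwall-type bound on the solution of a controlled differential
equation driven by a path with derivative bounded by `Lx`:
`‖z t‖ ≤ ‖G 0‖ * Lx * t * exp (LG * Lx * t)` for all `t ∈ [0, τ]`. -/
theorem cde_solution_bound
    (τ Lx LG : ℝ) (hτ : 0 ≤ τ) (hLx : 0 ≤ Lx) (hLG : 0 ≤ LG)
    (d p : ℕ) (hd : 0 < d) (hp : 0 < p)
    (x x' : ℝ → EuclideanSpace ℝ (Fin d))
    (hx : ∀ u ∈ Set.Icc (0:ℝ) τ, HasDerivAt x (x' u) u)
    (hx' : ∀ u ∈ Set.Icc (0:ℝ) τ, ‖x' u‖ ≤ Lx)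
    (G : EuclideanSpace ℝ (Fin p) → (EuclideanSpace ℝ (Fin d) →L[ℝ] EuclideanSpace ℝ (Fin p)))
    (hG : ∀ a b, ‖G a - G b‖ ≤ LG * ‖a - b‖)
    (z : ℝ → EuclideanSpace ℝ (Fin p)) (hz0 : z 0 = 0)
    (hz : ∀ u ∈ Set.Icc (0:ℝ) τ, HasDerivAt z (G (z u) (x' u)) u) :
    ∀ t ∈ Set.Icc (0:ℝ) τ, ‖z t‖ ≤ ‖G 0‖ * Lx * t * Real.exp (LG * Lx * t) := by
  intro t ht
  have ht0 : 0 ≤ t := ht.1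
  set K := LG * Lx with hK
  set ε := ‖G 0‖ * Lx with hε
  have hε0 : 0 ≤ ε := mul_nonneg (norm_nonneg _) hLx
  have key : ‖z t‖ ≤ gronwallBound 0 K ε (t - 0) := by
    have ho : ∀ u ∈ Set.Ico (0:ℝ) τ, ‖G (z u) (x' u)‖ ≤ K * ‖z u‖ + ε := ?_
    · exact norm_le_gronwallBound_of_norm_deriv_right_le
        (fun u hu => (hz u hu).continuousAt.continuousWithinAt)
        (fun u hu => (hz u (Set.Ico_subset_Icc_self hu)).hasDerivWithinAt)
        (by simp [hz0]) ho t ht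
    rintro u ⟨hu1, hu2⟩
    have hu' : u ∈ Set.Icc (0:ℝ) τ := ⟨hu1, hu2.le⟩
    have h1 : ‖G (z u)‖ ≤ ‖G 0‖ + LG * ‖z u‖ := by
      calc ‖G (z u)‖ ≤ ‖G 0‖ + ‖G (z u) - G 0‖ := by
            have := norm_sub_norm_le (G (z u)) (G 0); linarith
        _ ≤ ‖G 0‖ + LG * ‖z u‖ := by
            have := hG (z u) 0; rw [sub_zero] at this; linarith
    calc ‖G (z u) (x' u)‖ ≤ ‖G (z u)‖ * ‖x' u‖ := (G (z u)).le_opNorm _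
      _ ≤ (‖G 0‖ + LG * ‖z u‖) * Lx := by
          apply mul_le_mul h1 (hx' u hu') (norm_nonneg _)
          positivity
      _ = K * ‖z u‖ + ε := by ring
  rw [sub_zero] at key
  refine key.trans ?_
  rcases eq_or_ne K 0 with h0 | h0
  · rw [h0, gronwallBound_K0]
    simp only
    have h1 : (1:ℝ) ≤ Real.exp (0 * t) := by simp
    nlinarith [mul_nonneg hε0 ht0]
  · rw [gronwallBound_of_K_ne_0 h0]
    have hKpos : 0 < K := lt_of_le_of_ne (mul_nonneg hLG hLx) (Ne.symm h0)
    have hexp : Real.exp (K * t) - 1 ≤ K * t * Real.exp (K * t) := by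
      have h2 : 1 - K * t ≤ Real.exp (-(K * t)) := by
        linarith [Real.add_one_le_exp (-(K * t))]
      have h3 := mul_le_mul_of_nonneg_left h2 (Real.exp_pos (K * t)).le
      rw [← Real.exp_add] at h3
      simp only [add_neg_cancel, Real.exp_zero] at h3
      nlinarith
    have := mul_le_mul_of_nonneg_left hexp (div_nonneg hε0 hKpos.le)
    calc 0 * Real.exp (K * t) + ε / K * (Real.exp (K * t) - 1)
        ≤ ε / K * (K * t * Real.exp (K * t)) := by linarith
      _ = ε * t * Real.exp (K * t) := by field_simp
end

section
/- Let g : ℝ → ℝ be convex and three times differentiable, and let M > 0 be such that |g'''(x)| ≤ M · g''(x) for all x ∈ ℝ. Then for every t ≥ 0: (g''(0)/M²) · Φ(−M·t) ≤ g(t) − g(0) − t · g'(0) ≤ (g''(0)/M²) · Φ(M·t), where Φ(u) = exp(u) − u − 1. -/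
private lemma mono_aux_bach (f f' : ℝ → ℝ) (hd : ∀ x, HasDerivAt f (f' x) x)
    (h : ∀ x ∈ Set.Ici (0:ℝ), 0 ≤ f' x) : MonotoneOn f (Set.Ici 0) := by
  apply monotoneOn_of_deriv_nonneg (convex_Ici 0)
    (fun x _ => (hd x).continuousAt.continuousWithinAt)
    (fun x _ => (hd x).differentiableAt.differentiableWithinAt)
  intro x hx
  rw [(hd x).deriv]
  exact h x (le_of_lt (by simpa [interior_Ici] using hx))

/-- Self-concordance lemma (Bach 2010): if `g` is convex, three times differentiable
and `|g''' x| ≤ M * g'' x` everywhere, then for all `t ≥ 0`,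
`(g'' 0 / M²) Φ(−M t) ≤ g t − g 0 − t g' 0 ≤ (g'' 0 / M²) Φ(M t)`
where `Φ u = exp u − u − 1`. -/
theorem self_concordance_bach
    (g g' g'' g''' : ℝ → ℝ)
    (hg : ConvexOn ℝ Set.univ g)
    (hd1 : ∀ x, HasDerivAt g (g' x) x)
    (hd2 : ∀ x, HasDerivAt g' (g'' x) x)
    (hd3 : ∀ x, HasDerivAt g'' (g''' x) x)
    (M : ℝ) (hM : 0 < M)
    (hsc : ∀ x, |g''' x| ≤ M * g'' x) :
    ∀ t : ℝ, 0 ≤ t →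
      g'' 0 / M ^ 2 * (Real.exp (-M * t) - (-M * t) - 1) ≤ g t - g 0 - t * g' 0 ∧
      g t - g 0 - t * g' 0 ≤ g'' 0 / M ^ 2 * (Real.exp (M * t) - M * t - 1) := by
  have hMne : M ≠ 0 := ne_of_gt hM
  have hg2 : ∀ x, 0 ≤ g'' x := fun x => by nlinarith [abs_nonneg (g''' x), hsc x]
  have hup : ∀ x, g''' x ≤ M * g'' x := fun x => (le_abs_self _).trans (hsc x)
  have hlo : ∀ x, -(M * g'' x) ≤ g''' x := fun x =>
    (neg_le_neg (hsc x)).trans (neg_abs_le _)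
  -- derivative of e^{±Mt}
  have heM : ∀ t : ℝ, HasDerivAt (fun s => Real.exp (M * s)) (Real.exp (M * t) * M) t := by
    intro t
    simpa using (((hasDerivAt_id t).const_mul M).exp)
  have heN : ∀ t : ℝ, HasDerivAt (fun s => Real.exp (-(M * s))) (Real.exp (-(M * t)) * (-M)) t := by
    intro t
    simpa using ((((hasDerivAt_id t).const_mul M).neg).exp)
  -- step 2: g'' t ≤ g'' 0 * e^{Mt} and g'' 0 * e^{-Mt} ≤ g'' t for t ≥ 0
  have hA : ∀ t : ℝ, HasDerivAt (fun s => g'' s * Real.exp (-(M * s)))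
      ((g''' t - M * g'' t) * Real.exp (-(M * t))) t := by
    intro t
    have : HasDerivAt (fun s => g'' s * Real.exp (-(M * s))) _ t := (hd3 t).mul (heN t)
    convert this using 1
    ring
  have hAnt : Antitone (fun s => g'' s * Real.exp (-(M * s))) := by
    apply antitone_of_deriv_nonpos (fun s => (hA s).differentiableAt)
    intro s
    rw [(hA s).deriv]
    nlinarith [Real.exp_pos (-(M * s)), hup s]
  have hB : ∀ t : ℝ, HasDerivAt (fun s => g'' s * Real.exp (M * s))
      ((g''' t + M * g'' t) * Real.exp (M * t)) t := by
    intro t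
    have : HasDerivAt (fun s => g'' s * Real.exp (M * s)) _ t := (hd3 t).mul (heM t)
    convert this using 1
    ring
  have hBmono : Monotone (fun s => g'' s * Real.exp (M * s)) := by
    apply monotone_of_deriv_nonneg (fun s => (hB s).differentiableAt)
    intro s
    rw [(hB s).deriv]
    nlinarith [Real.exp_pos (M * s), hlo s]
  have hub : ∀ t : ℝ, 0 ≤ t → g'' t ≤ g'' 0 * Real.exp (M * t) := by
    intro t ht
    have h1 := hAnt ht
    simp only [mul_zero, neg_zero, Real.exp_zero, mul_one] at h1
    have h3 : g'' t * Real.exp (-(M * t)) * Real.exp (M * t) = g'' t := by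
      rw [mul_assoc, ← Real.exp_add]; simp
    have h4 := mul_le_mul_of_nonneg_right h1 (Real.exp_pos (M * t)).le
    rw [h3] at h4; exact h4
  have hlb : ∀ t : ℝ, 0 ≤ t → g'' 0 * Real.exp (-(M * t)) ≤ g'' t := by
    intro t ht
    have h1 := hBmono ht
    simp only [mul_zero, Real.exp_zero, mul_one] at h1
    have h3 : g'' t * Real.exp (M * t) * Real.exp (-(M * t)) = g'' t := by
      rw [mul_assoc, ← Real.exp_add]; simp
    have h4 := mul_le_mul_of_nonneg_right h1 (Real.exp_pos (-(M * t))).le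
    rw [h3] at h4; exact h4
  -- step 3: bounds for g' via monotonicity of q and r
  set q : ℝ → ℝ := fun t => g'' 0 / M * (Real.exp (M * t) - 1) - (g' t - g' 0) with hqdef
  have hq : ∀ t : ℝ, HasDerivAt q (g'' 0 * Real.exp (M * t) - g'' t) t := by
    intro t
    have : HasDerivAt q _ t := (((heM t).sub_const 1).const_mul (g'' 0 / M)).sub ((hd2 t).sub_const (g' 0))
    convert this using 1
    field_simp
  have hqmono : MonotoneOn q (Set.Ici 0) :=
    mono_aux_bach q _ hq (fun x hx => by have := hub x hx; linarith)
  have hq0 : q 0 = 0 := by simp [hqdef]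
  have hqpos : ∀ t : ℝ, 0 ≤ t → 0 ≤ q t := by
    intro t ht
    have := hqmono (Set.self_mem_Ici) (Set.mem_Ici.mpr ht) ht
    rw [hq0] at this; exact this
  set r : ℝ → ℝ := fun t => (g' t - g' 0) - g'' 0 / M * (1 - Real.exp (-(M * t))) with hrdef
  have hr : ∀ t : ℝ, HasDerivAt r (g'' t - g'' 0 * Real.exp (-(M * t))) t := by
    intro t
    have : HasDerivAt r _ t := ((hd2 t).sub_const (g' 0)).sub
      (((hasDerivAt_const t (1:ℝ)).sub (heN t)).const_mul (g'' 0 / M))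
    convert this using 1
    field_simp
    ring
  have hrmono : MonotoneOn r (Set.Ici 0) :=
    mono_aux_bach r _ hr (fun x hx => by have := hlb x hx; linarith)
  have hr0 : r 0 = 0 := by simp [hrdef]
  have hrpos : ∀ t : ℝ, 0 ≤ t → 0 ≤ r t := by
    intro t ht
    have := hrmono (Set.self_mem_Ici) (Set.mem_Ici.mpr ht) ht
    rw [hr0] at this; exact this
  -- step 4: bounds for g
  set F : ℝ → ℝ := fun t => g'' 0 / M ^ 2 * (Real.exp (M * t) - M * t - 1)
      - (g t - g 0 - t * g' 0) with hFdef
  have hF : ∀ t : ℝ, HasDerivAt F (q t) t := by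
    intro t
    have : HasDerivAt F _ t := ((((heM t).sub ((hasDerivAt_id t).const_mul M)).sub_const 1).const_mul
        (g'' 0 / M ^ 2)).sub
      (((hd1 t).sub_const (g 0)).sub ((hasDerivAt_id t).mul_const (g' 0)))
    convert this using 1
    simp only [hqdef]
    field_simp
  have hFmono : MonotoneOn F (Set.Ici 0) := mono_aux_bach F q hF (fun x hx => hqpos x hx)
  have hF0 : F 0 = 0 := by simp [hFdef]
  set G : ℝ → ℝ := fun t => (g t - g 0 - t * g' 0)
      - g'' 0 / M ^ 2 * (Real.exp (-(M * t)) + M * t - 1) with hGdef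
  have hG : ∀ t : ℝ, HasDerivAt G (r t) t := by
    intro t
    have : HasDerivAt G _ t := (((hd1 t).sub_const (g 0)).sub ((hasDerivAt_id t).mul_const (g' 0))).sub
      ((((heN t).add ((hasDerivAt_id t).const_mul M)).sub_const 1).const_mul (g'' 0 / M ^ 2))
    convert this using 1
    simp only [hrdef]
    field_simp
    ring
  have hGmono : MonotoneOn G (Set.Ici 0) := mono_aux_bach G r hG (fun x hx => hrpos x hx)
  have hG0 : G 0 = 0 := by simp [hGdef]
  intro t ht
  have h1 := hFmono (Set.self_mem_Ici) (Set.mem_Ici.mpr ht) ht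
  have h2 := hGmono (Set.self_mem_Ici) (Set.mem_Ici.mpr ht) ht
  rw [hF0] at h1
  rw [hG0] at h2
  simp only [hFdef, hGdef] at h1 h2
  have hexp : Real.exp (-M * t) = Real.exp (-(M * t)) := by ring_nf
  constructor
  · rw [hexp]; linarith
  · linarith
end

section
/- For every real number x ≥ 0: (x − 1)² ≤ (4/3 + (2/3)·x) · (x·log x − x + 1), with the convention that x·log x = 0 at x = 0. -/
noncomputable def hfunAux (t : ℝ) : ℝ :=
  Real.log t - 3 / 2 * ((t - 1) * (t + 5)) / (t + 2) ^ 2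

noncomputable def gfunAux (t : ℝ) : ℝ :=
  t * Real.log t - t + 1 - 3 / 2 * (t - 1) ^ 2 / (t + 2)

lemma hasDerivAt_hfunAux {x : ℝ} (hx : 0 < x) :
    HasDerivAt hfunAux (1 / x - 27 / (x + 2) ^ 3) x := by
  have h2 : (0:ℝ) < x + 2 := by linarith
  have hne : x + 2 ≠ 0 := h2.ne'
  have h1 : HasDerivAt Real.log x⁻¹ x := Real.hasDerivAt_log hx.ne'
  have hnum : HasDerivAt (fun t : ℝ => 3 / 2 * ((t - 1) * (t + 5)))
      (3 / 2 * (1 * (x + 5) + (x - 1) * 1)) x := by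
    exact (((hasDerivAt_id x).sub_const 1).mul ((hasDerivAt_id x).add_const 5)).const_mul _
  have hden : HasDerivAt (fun t : ℝ => (t + 2) ^ 2) (2 * (x + 2) ^ 1 * 1) x := by
    exact ((hasDerivAt_id x).add_const 2).pow 2
  have hdiv := hnum.div hden (pow_ne_zero 2 hne)
  have := h1.sub hdiv
  refine this.congr_deriv ?_
  field_simp
  ring

lemma hasDerivAt_gfunAux {x : ℝ} (hx : 0 < x) :
    HasDerivAt gfunAux (hfunAux x) x := by
  have h2 : (0:ℝ) < x + 2 := by linarith
  have hne : x + 2 ≠ 0 := h2.ne'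
  have hxlog : HasDerivAt (fun t : ℝ => t * Real.log t) (1 * Real.log x + x * x⁻¹) x :=
    (hasDerivAt_id x).mul (Real.hasDerivAt_log hx.ne')
  have hnum : HasDerivAt (fun t : ℝ => 3 / 2 * (t - 1) ^ 2)
      (3 / 2 * (2 * (x - 1) ^ 1 * 1)) x :=
    (((hasDerivAt_id x).sub_const 1).pow 2).const_mul _
  have hden : HasDerivAt (fun t : ℝ => t + 2) 1 x := (hasDerivAt_id x).add_const 2
  have hdiv := hnum.div hden hne
  have := ((hxlog.sub (hasDerivAt_id x)).add_const 1).sub hdiv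
  refine this.congr_deriv ?_
  unfold hfunAux
  field_simp
  ring

lemma hfunAux_one : hfunAux 1 = 0 := by
  unfold hfunAux; simp [Real.log_one]

lemma deriv_hfunAux_nonneg {t : ℝ} (ht : 0 < t) : 0 ≤ 1 / t - 27 / (t + 2) ^ 3 := by
  have h2 : (0:ℝ) < (t + 2) ^ 3 := by positivity
  rw [sub_nonneg, div_le_div_iff₀ h2 ht]
  nlinarith [sq_nonneg (t - 1), ht.le]

lemma hfunAux_nonpos {t : ℝ} (ht : 0 < t) (ht1 : t ≤ 1) : hfunAux t ≤ 0 := by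
  have mono : MonotoneOn hfunAux (Set.Icc t 1) := by
    apply monotoneOn_of_deriv_nonneg (convex_Icc t 1)
    · intro s hs
      exact (hasDerivAt_hfunAux (lt_of_lt_of_le ht hs.1)).continuousAt.continuousWithinAt
    · intro s hs
      rw [interior_Icc] at hs
      exact (hasDerivAt_hfunAux (lt_trans ht hs.1)).differentiableAt.differentiableWithinAt
    · intro s hs
      rw [interior_Icc] at hs
      have hst : 0 < s := lt_trans ht hs.1
      rw [(hasDerivAt_hfunAux hst).deriv]
      exact deriv_hfunAux_nonneg hst
  have := mono (Set.mem_Icc.2 ⟨le_refl t, ht1⟩) (Set.mem_Icc.2 ⟨ht1, le_refl 1⟩) ht1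
  rwa [hfunAux_one] at this

lemma hfunAux_nonneg {t : ℝ} (ht : 1 ≤ t) : 0 ≤ hfunAux t := by
  have mono : MonotoneOn hfunAux (Set.Icc 1 t) := by
    apply monotoneOn_of_deriv_nonneg (convex_Icc 1 t)
    · intro s hs
      exact (hasDerivAt_hfunAux (lt_of_lt_of_le one_pos hs.1)).continuousAt.continuousWithinAt
    · intro s hs
      rw [interior_Icc] at hs
      exact (hasDerivAt_hfunAux (lt_trans one_pos hs.1)).differentiableAt.differentiableWithinAt
    · intro s hs
      rw [interior_Icc] at hs
      have hst : 0 < s := lt_trans one_pos hs.1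
      rw [(hasDerivAt_hfunAux hst).deriv]
      exact deriv_hfunAux_nonneg hst
  have := mono (Set.mem_Icc.2 ⟨le_refl 1, ht⟩) (Set.mem_Icc.2 ⟨ht, le_refl t⟩) ht
  rwa [hfunAux_one] at this

lemma gfunAux_one : gfunAux 1 = 0 := by
  unfold gfunAux; simp [Real.log_one]

lemma gfunAux_nonneg {x : ℝ} (hx : 0 < x) : 0 ≤ gfunAux x := by
  rcases le_total x 1 with hx1 | hx1
  · have anti : AntitoneOn gfunAux (Set.Icc x 1) := by
      apply antitoneOn_of_deriv_nonpos (convex_Icc x 1)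
      · intro s hs
        exact (hasDerivAt_gfunAux (lt_of_lt_of_le hx hs.1)).continuousAt.continuousWithinAt
      · intro s hs
        rw [interior_Icc] at hs
        exact (hasDerivAt_gfunAux (lt_trans hx hs.1)).differentiableAt.differentiableWithinAt
      · intro s hs
        rw [interior_Icc] at hs
        have hst : 0 < s := lt_trans hx hs.1
        rw [(hasDerivAt_gfunAux hst).deriv]
        exact hfunAux_nonpos hst hs.2.le
    have := anti (Set.mem_Icc.2 ⟨le_refl x, hx1⟩) (Set.mem_Icc.2 ⟨hx1, le_refl 1⟩) hx1
    rwa [gfunAux_one] at this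
  · have mono : MonotoneOn gfunAux (Set.Icc 1 x) := by
      apply monotoneOn_of_deriv_nonneg (convex_Icc 1 x)
      · intro s hs
        exact (hasDerivAt_gfunAux (lt_of_lt_of_le one_pos hs.1)).continuousAt.continuousWithinAt
      · intro s hs
        rw [interior_Icc] at hs
        exact (hasDerivAt_gfunAux (lt_trans one_pos hs.1)).differentiableAt.differentiableWithinAt
      · intro s hs
        rw [interior_Icc] at hs
        have hst : 0 < s := lt_trans one_pos hs.1
        rw [(hasDerivAt_gfunAux hst).deriv]
        exact hfunAux_nonneg hs.1.le
    have := mono (Set.mem_Icc.2 ⟨le_refl 1, hx1⟩) (Set.mem_Icc.2 ⟨hx1, le_refl x⟩) hx1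
    rwa [gfunAux_one] at this

/-- The elementary pointwise inequality `(x − 1)² ≤ (4/3 + (2/3)x)(x log x − x + 1)`
for `x ≥ 0`, used in the Pinsker-type inequality. (Note `Real.log 0 = 0`, so the
convention `x·log x = 0` at `x = 0` is automatic.) -/
theorem sq_sub_one_le_mul_xlogx (x : ℝ) (hx : 0 ≤ x) :
    (x - 1) ^ 2 ≤ (4 / 3 + 2 / 3 * x) * (x * Real.log x - x + 1) := by
  rcases eq_or_lt_of_le hx with h0 | h0
  · rw [← h0]; norm_num
  · have hg := gfunAux_nonneg h0
    unfold gfunAux at hg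
    have h2 : (0:ℝ) < x + 2 := by linarith
    rw [sub_nonneg, div_le_iff₀ h2] at hg
    nlinarith [hg]
end

section
/- Under the stated hypotheses: ( ∫ |a − b| dμ )² ≤ ( (4/3) ∫ b dμ + (2/3) ∫ a dμ ) · ∫ ( a · log(a/b) − a + b ) dμ. -/
open MeasureTheory
/-- `log x ≥ 2(x-1)/(x+1)` type inequality, as monotonicity of the difference. -/
lemma pinsker_aux_mono : MonotoneOn (fun x : ℝ => Real.log x - 2 * (x - 1) / (x + 1))
    (Set.Ioi (0:ℝ)) := by
  have hderiv : ∀ x ∈ Set.Ioi (0:ℝ), HasDerivAt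
      (fun x : ℝ => Real.log x - 2 * (x - 1) / (x + 1))
      (x⁻¹ - 4 / (x + 1) ^ 2) x := by
    intro x hx
    have hx0 : x ≠ 0 := ne_of_gt hx
    have hx1 : x + 1 ≠ 0 := by nlinarith [Set.mem_Ioi.mp hx]
    have h1 : HasDerivAt (fun x : ℝ => 2 * (x - 1) / (x + 1))
        ((2 * (x + 1) - 2 * (x - 1) * 1) / (x + 1) ^ 2) x := by
      have := (((hasDerivAt_id x).sub_const 1).const_mul 2).div
        ((hasDerivAt_id x).add_const 1) hx1
      exact this.congr_deriv (by simp only [id]; ring)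
    have h2 := (Real.hasDerivAt_log hx0).sub h1
    rw [show (2 * (x + 1) - 2 * (x - 1) * 1 : ℝ) = 4 by ring] at h2
    exact h2
  apply monotoneOn_of_deriv_nonneg (convex_Ioi 0)
  · exact continuousOn_of_forall_continuousAt fun x hx => (hderiv x hx).continuousAt
  · intro x hx
    rw [interior_Ioi] at hx
    exact (hderiv x hx).differentiableAt.differentiableWithinAt
  · intro x hx
    rw [interior_Ioi] at hx
    rw [(hderiv x hx).deriv]
    have hx0 : (0:ℝ) < x := hx
    rw [sub_nonneg, div_le_iff₀ (by positivity), inv_mul_eq_div, le_div_iff₀ hx0]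
    nlinarith [sq_nonneg (x - 1)]

lemma pinsker_aux_key {t : ℝ} (ht : 0 < t) :
    3 * (t - 1) ^ 2 ≤ (2 * t + 4) * (t * Real.log t - t + 1) := by
  set g : ℝ → ℝ := fun t => (2 * t + 4) * (t * Real.log t - t + 1) - 3 * (t - 1) ^ 2 with hg
  have hderiv : ∀ x : ℝ, 0 < x → HasDerivAt g
      (4 * ((x + 1) * Real.log x - 2 * (x - 1))) x := by
    intro x hx
    have h1 : HasDerivAt (fun t : ℝ => t * Real.log t - t + 1) (Real.log x) x := by
      have := (Real.hasDerivAt_mul_log (ne_of_gt hx)).sub (hasDerivAt_id x)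
      simpa using this.add_const 1
    have h2 : HasDerivAt (fun t : ℝ => 2 * t + 4) 2 x := by
      have := ((hasDerivAt_id x).const_mul 2).add_const 4
      simpa using this
    have h3 : HasDerivAt (fun t : ℝ => 3 * (t - 1) ^ 2) (3 * (2 * (x - 1))) x := by
      have := (((hasDerivAt_id x).sub_const 1).pow 2).const_mul 3
      simpa using this
    have := (h2.mul h1).sub h3
    exact this.congr_deriv (by ring : _ = 4 * ((x + 1) * Real.log x - 2 * (x - 1)))
  have hg1 : g 1 = 0 := by simp [hg]
  have hsign : ∀ x : ℝ, 0 < x → 0 ≤ g x := by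
    intro x hx
    rcases le_total 1 x with h | h
    · have hmono : MonotoneOn g (Set.Ici (1:ℝ)) := by
        apply monotoneOn_of_deriv_nonneg (convex_Ici 1)
        · exact continuousOn_of_forall_continuousAt fun y hy =>
            (hderiv y (lt_of_lt_of_le zero_lt_one hy)).continuousAt
        · intro y hy
          rw [interior_Ici] at hy
          exact (hderiv y (lt_trans zero_lt_one hy)).differentiableAt.differentiableWithinAt
        · intro y hy
          rw [interior_Ici] at hy
          rw [(hderiv y (lt_trans zero_lt_one hy)).deriv]
          have hy0 : (0:ℝ) < y := lt_trans zero_lt_one hy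
          have := pinsker_aux_mono (Set.mem_Ioi.mpr zero_lt_one) (Set.mem_Ioi.mpr hy0) hy.le
          simp only [Real.log_one] at this
          have h2 : 2 * (y - 1) / (y + 1) ≤ Real.log y := by
            have : (0:ℝ) ≤ Real.log y - 2 * (y - 1) / (y + 1) := by
              simpa using this
            linarith
          rw [div_le_iff₀ (by positivity)] at h2
          nlinarith
      have := hmono (Set.mem_Ici.mpr le_rfl) (Set.mem_Ici.mpr h) h
      rwa [hg1] at this
    · have hanti : AntitoneOn g (Set.Ioc (0:ℝ) 1) := by
        apply antitoneOn_of_deriv_nonpos (convex_Ioc 0 1)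
        · exact continuousOn_of_forall_continuousAt fun y hy => (hderiv y hy.1).continuousAt
        · intro y hy
          rw [interior_Ioc] at hy
          exact (hderiv y hy.1).differentiableAt.differentiableWithinAt
        · intro y hy
          rw [interior_Ioc] at hy
          rw [(hderiv y hy.1).deriv]
          have hy0 : (0:ℝ) < y := hy.1
          have := pinsker_aux_mono (Set.mem_Ioi.mpr hy0) (Set.mem_Ioi.mpr zero_lt_one) hy.2.le
          simp only [Real.log_one] at this
          have h2 : Real.log y ≤ 2 * (y - 1) / (y + 1) := by linarith [this]
          rw [le_div_iff₀ (by positivity : (0:ℝ) < y + 1)] at h2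
          nlinarith
      have := hanti (Set.mem_Ioc.mpr ⟨hx, h⟩) (Set.mem_Ioc.mpr ⟨zero_lt_one, le_rfl⟩) h
      rwa [hg1] at this
  have := hsign t ht
  simp only [hg] at this
  linarith

/-- pointwise inequality in two variables -/
lemma pinsker_aux_pt {a b : ℝ} (ha : 0 < a) (hb : 0 < b) :
    (a - b) ^ 2 ≤ (2 / 3 * a + 4 / 3 * b) * (a * Real.log (a / b) - a + b) := by
  set t := a / b with htdef
  have ht : 0 < t := div_pos ha hb
  have hab : a = t * b := by rw [htdef, div_mul_cancel₀ a hb.ne']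
  have h := pinsker_aux_key ht
  set L := Real.log t with hL
  calc (a - b) ^ 2 = b ^ 2 / 3 * (3 * (t - 1) ^ 2) := by rw [hab]; ring
    _ ≤ b ^ 2 / 3 * ((2 * t + 4) * (t * L - t + 1)) :=
        mul_le_mul_of_nonneg_left h (by positivity)
    _ = (2 / 3 * a + 4 / 3 * b) * (a * L - a + b) := by rw [hab]; ring

lemma pinsker_aux_nonneg {a b : ℝ} (ha : 0 < a) (hb : 0 < b) :
    0 ≤ a * Real.log (a / b) - a + b := by
  have ht : 0 < a / b := div_pos ha hb
  have h := pinsker_aux_key ht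
  have h2 : 0 ≤ (a / b) * Real.log (a / b) - (a / b) + 1 := by nlinarith [sq_nonneg (a/b - 1)]
  have h3 := mul_le_mul_of_nonneg_left h2 hb.le
  have : a / b * b = a := div_mul_cancel₀ a (ne_of_gt hb)
  nlinarith

/-- Measure-theoretic core of the Pinsker-type inequality: for positive integrable
intensities `a`, `b`,
`(∫ |a − b|)² ≤ ((4/3) ∫ b + (2/3) ∫ a) · ∫ (a log(a/b) − a + b)`. -/
theorem pinsker_type_inequality
    {X : Type*} [MeasurableSpace X] (μ : Measure X)
    (a b : X → ℝ) (ha : Measurable a) (hb : Measurable b)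
    (hapos : ∀ᵐ x ∂μ, 0 < a x) (hbpos : ∀ᵐ x ∂μ, 0 < b x)
    (hai : Integrable a μ) (hbi : Integrable b μ)
    (hkl : Integrable (fun x => a x * Real.log (a x / b x)) μ) :
    (∫ x, |a x - b x| ∂μ) ^ 2 ≤
      (4 / 3 * ∫ x, b x ∂μ + 2 / 3 * ∫ x, a x ∂μ) *
        ∫ x, (a x * Real.log (a x / b x) - a x + b x) ∂μ := by
  classical
  set w : X → ℝ := fun x => 2 / 3 * a x + 4 / 3 * b x with hw
  set K : X → ℝ := fun x => a x * Real.log (a x / b x) - a x + b x with hK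
  have hwmeas : Measurable w := ((ha.const_mul _).add (hb.const_mul _))
  have hwi : Integrable w μ := (hai.const_mul _).add (hbi.const_mul _)
  have hKi : Integrable K μ := (hkl.sub hai).add hbi
  set F : X → ℝ := fun x => Real.sqrt (w x) with hF
  set G : X → ℝ := fun x => |a x - b x| / Real.sqrt (w x) with hG
  have hFmeas : Measurable F := Real.continuous_sqrt.measurable.comp hwmeas
  have hGmeas : Measurable G := (ha.sub hb).abs.div hFmeas
  -- a.e. facts
  have hwpos : ∀ᵐ x ∂μ, 0 < w x := by
    filter_upwards [hapos, hbpos] with x hax hbx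
    simp only [hw]; positivity
  have hFGae : (fun x => F x * G x) =ᵐ[μ] fun x => |a x - b x| := by
    filter_upwards [hwpos] with x hwx
    have : Real.sqrt (w x) ≠ 0 := by positivity
    simp only [hF, hG]; field_simp
  have hF2ae : (fun x => F x ^ 2) =ᵐ[μ] w := by
    filter_upwards [hwpos] with x hwx
    simp [hF, Real.sq_sqrt hwx.le]
  have hG2leK : ∀ᵐ x ∂μ, G x ^ 2 ≤ K x := by
    filter_upwards [hapos, hbpos, hwpos] with x hax hbx hwx
    have hpt := pinsker_aux_pt hax hbx
    have : G x ^ 2 = (a x - b x) ^ 2 / w x := by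
      rw [hG, div_pow, Real.sq_sqrt hwx.le, sq_abs]
    rw [this, div_le_iff₀ hwx]
    calc (a x - b x) ^ 2 ≤ (2 / 3 * a x + 4 / 3 * b x) * K x := hpt
      _ = K x * w x := by rw [hw, hK]; ring
  have hKnn : ∀ᵐ x ∂μ, 0 ≤ K x := by
    filter_upwards [hapos, hbpos] with x hax hbx
    exact pinsker_aux_nonneg hax hbx
  have hG2i : Integrable (fun x => G x ^ 2) μ := by
    refine hKi.mono' ((hGmeas.pow_const 2).aestronglyMeasurable) ?_
    filter_upwards [hG2leK] with x hx
    rw [Real.norm_of_nonneg (sq_nonneg _)]; exact hx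
  have hF2i : Integrable (fun x => F x ^ 2) μ := hwi.congr hF2ae.symm
  have hFmem : MemLp F 2 μ :=
    (memLp_two_iff_integrable_sq hFmeas.aestronglyMeasurable).2 hF2i
  have hGmem : MemLp G 2 μ :=
    (memLp_two_iff_integrable_sq hGmeas.aestronglyMeasurable).2 hG2i
  have hpq : (2:ℝ).HolderConjugate 2 := Real.HolderConjugate.two_two
  have hFnn : 0 ≤ᵐ[μ] F := Filter.Eventually.of_forall fun x => Real.sqrt_nonneg _
  have hGnn : 0 ≤ᵐ[μ] G := Filter.Eventually.of_forall fun x =>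
    div_nonneg (abs_nonneg _) (Real.sqrt_nonneg _)
  have hof : ENNReal.ofReal (2:ℝ) = 2 := by norm_num
  have holder := integral_mul_le_Lp_mul_Lq_of_nonneg hpq hFnn hGnn
    (hof ▸ hFmem) (hof ▸ hGmem)
  -- convert rpow to pow in holder
  have hrpow : ∀ f : X → ℝ, (fun x => f x ^ (2:ℝ)) = fun x => f x ^ (2:ℕ) := by
    intro f; funext x
    rw [show (2:ℝ) = ((2:ℕ):ℝ) by norm_num, Real.rpow_natCast]
  simp only [hrpow] at holder
  have hA : (0:ℝ) ≤ ∫ x, F x ^ (2:ℕ) ∂μ :=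
    integral_nonneg fun x => sq_nonneg _
  have hB : (0:ℝ) ≤ ∫ x, G x ^ (2:ℕ) ∂μ :=
    integral_nonneg fun x => sq_nonneg _
  have hFGnn : (0:ℝ) ≤ ∫ x, F x * G x ∂μ := by
    apply integral_nonneg_of_ae
    filter_upwards [hFnn, hGnn] with x h1 h2
    exact mul_nonneg h1 h2
  have hsq : (∫ x, F x * G x ∂μ) ^ 2 ≤
      (∫ x, F x ^ (2:ℕ) ∂μ) * (∫ x, G x ^ (2:ℕ) ∂μ) := by
    have h2 := pow_le_pow_left₀ hFGnn holder 2
    calc (∫ x, F x * G x ∂μ) ^ 2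
        ≤ ((∫ x, F x ^ (2:ℕ) ∂μ) ^ (1/2 : ℝ) * (∫ x, G x ^ (2:ℕ) ∂μ) ^ (1/2 : ℝ)) ^ 2 := h2
      _ = (∫ x, F x ^ (2:ℕ) ∂μ) * (∫ x, G x ^ (2:ℕ) ∂μ) := by
          rw [mul_pow, ← Real.rpow_natCast ((∫ x, F x ^ (2:ℕ) ∂μ) ^ (1/2 : ℝ)) 2,
            ← Real.rpow_natCast ((∫ x, G x ^ (2:ℕ) ∂μ) ^ (1/2 : ℝ)) 2,
            ← Real.rpow_mul hA, ← Real.rpow_mul hB]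
          norm_num
  have hIF2 : ∫ x, F x ^ (2:ℕ) ∂μ = ∫ x, w x ∂μ := integral_congr_ae hF2ae
  have hIG2 : ∫ x, G x ^ (2:ℕ) ∂μ ≤ ∫ x, K x ∂μ :=
    integral_mono_ae hG2i hKi hG2leK
  have hIw : ∫ x, w x ∂μ = 4 / 3 * ∫ x, b x ∂μ + 2 / 3 * ∫ x, a x ∂μ := by
    rw [hw, integral_add (hai.const_mul _) (hbi.const_mul _),
      integral_const_mul, integral_const_mul]
    ring
  have hIK : (0:ℝ) ≤ ∫ x, K x ∂μ := integral_nonneg_of_ae hKnn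
  calc (∫ x, |a x - b x| ∂μ) ^ 2 = (∫ x, F x * G x ∂μ) ^ 2 := by
        rw [integral_congr_ae hFGae]
    _ ≤ (∫ x, F x ^ (2:ℕ) ∂μ) * (∫ x, G x ^ (2:ℕ) ∂μ) := hsq
    _ ≤ (∫ x, w x ∂μ) * (∫ x, K x ∂μ) := by
        rw [hIF2]
        exact mul_le_mul_of_nonneg_left hIG2
          (integral_nonneg_of_ae (hwpos.mono fun x h => h.le))
    _ = (4 / 3 * ∫ x, b x ∂μ + 2 / 3 * ∫ x, a x ∂μ) * ∫ x, K x ∂μ := by rw [hIw]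
end

section
/- Under the stated hypotheses, the following double inequality holds: (1/(2·τ·Λ)) · ( ∫₀^τ |a(s) − b(s)| ds )² ≤ ∫₀^τ ( a(s)·log(a(s)/b(s)) − a(s) + b(s) ) ds ≤ ((exp(M) − M − 1)/M²) · ∫₀^τ ( log b(s) − log a(s) )² · a(s) ds. -/
open MeasureTheory

private lemma integral_rep (r : ℝ) (hr : r ≠ 0) :
    ∫ s in (0:ℝ)..1, (1-s) * Real.exp (r*s) = (Real.exp r - r - 1) / r^2 := by
  have key : ∀ s ∈ Set.uIcc (0:ℝ) 1, HasDerivAt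
      (fun t => Real.exp (r*t) * ((1-t)/r + 1/r^2)) ((1-s) * Real.exp (r*s)) s := by
    intro s _
    have h1 : HasDerivAt (fun t : ℝ => r*t) r s := by
      simpa using (hasDerivAt_id s).const_mul r
    have h2 : HasDerivAt (fun t : ℝ => Real.exp (r*t)) (Real.exp (r*s) * r) s :=
      (Real.hasDerivAt_exp (r*s)).comp s h1
    have h3 : HasDerivAt (fun t : ℝ => (1-t)/r + 1/r^2) (-(1/r)) s := by
      have h4 : HasDerivAt (fun t : ℝ => (1-t)/r) (-(1/r)) s := by
        have := ((hasDerivAt_id s).const_sub 1).div_const r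
        simpa [neg_div] using this
      exact h4.add_const (1/r^2)
    have := h2.mul h3
    exact this.congr_deriv (by field_simp; ring)
  have hcont : IntervalIntegrable (fun s => (1-s) * Real.exp (r*s)) volume 0 1 := by
    apply Continuous.intervalIntegrable
    continuity
  have := intervalIntegral.integral_eq_sub_of_hasDerivAt key hcont
  rw [this]
  field_simp
  rw [mul_zero, Real.exp_zero]
  ring

private lemma exp_quad_bound {M r : ℝ} (hM : 0 < M) (hr : r ≤ M) :
    Real.exp r - r - 1 ≤ (Real.exp M - M - 1) / M ^ 2 * r ^ 2 := by
  rcases eq_or_ne r 0 with h | h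
  · simp [h]
  · have hle : (Real.exp r - r - 1) / r^2 ≤ (Real.exp M - M - 1) / M^2 := by
      rw [← integral_rep r h, ← integral_rep M hM.ne']
      apply intervalIntegral.integral_mono_on zero_le_one
      · apply Continuous.intervalIntegrable; continuity
      · apply Continuous.intervalIntegrable; continuity
      · intro s hs
        have h1 : (0:ℝ) ≤ 1 - s := by linarith [hs.2]
        have h2 : Real.exp (r*s) ≤ Real.exp (M*s) :=
          Real.exp_le_exp.mpr (mul_le_mul_of_nonneg_right hr hs.1)
        exact mul_le_mul_of_nonneg_left h2 h1
    have hr2 : (0:ℝ) < r^2 := by positivity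
    calc Real.exp r - r - 1 = (Real.exp r - r - 1)/r^2 * r^2 := by field_simp
    _ ≤ (Real.exp M - M - 1)/M^2 * r^2 := by
        exact mul_le_mul_of_nonneg_right hle hr2.le


-- for r ≤ 0 : (e^r - 1)^2 ≤ 2(e^r - r - 1)
private lemma w_nonneg {r : ℝ} (hr : r ≤ 0) :
    Real.exp (2*r) + 2*r + 3 ≤ 4 * Real.exp r := by
  set w : ℝ → ℝ := fun t => 4 * Real.exp t - Real.exp (2*t) - 2*t - 3 with hw
  have hd : ∀ t : ℝ, HasDerivAt w (4 * Real.exp t - 2 * Real.exp (2*t) - 2) t := by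
    intro t
    have h1 : HasDerivAt (fun t : ℝ => 4 * Real.exp t) (4 * Real.exp t) t :=
      (Real.hasDerivAt_exp t).const_mul 4
    have h2 : HasDerivAt (fun t : ℝ => Real.exp (2*t)) (Real.exp (2*t) * 2) t :=
      (Real.hasDerivAt_exp (2*t)).comp t (by simpa using (hasDerivAt_id t).const_mul 2)
    have h3 : HasDerivAt (fun t : ℝ => 2*t) 2 t := by
      simpa using (hasDerivAt_id t).const_mul 2
    have := ((h1.sub h2).sub h3).sub_const 3
    exact this.congr_deriv (by ring)
  have hanti : AntitoneOn w (Set.Icc r 0) := by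
    apply antitoneOn_of_deriv_nonpos (convex_Icc r 0)
    · exact (Continuous.continuousOn (by continuity))
    · intro t ht
      exact (hd t).differentiableAt.differentiableWithinAt
    · intro t _
      rw [(hd t).deriv]
      have h2t : Real.exp (2*t) = Real.exp t * Real.exp t := by rw [two_mul, Real.exp_add]
      nlinarith [sq_nonneg (Real.exp t - 1)]
  have h0 : w 0 = 0 := by simp [hw]; norm_num
  have := hanti (Set.mem_Icc.mpr ⟨le_refl r, hr⟩) (Set.mem_Icc.mpr ⟨hr, le_refl 0⟩) hr
  rw [h0] at this
  simp only [hw] at this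
  linarith

private lemma pt_lower {Λ x y : ℝ} (hΛ : 0 < Λ) (hx : 0 < x) (hxΛ : x ≤ Λ) (hy : 0 < y) (hyΛ : y ≤ Λ) :
    (x - y)^2 ≤ 2 * Λ * (x * Real.log (x/y) - x + y) := by
  set r : ℝ := Real.log y - Real.log x with hrdef
  have hey : Real.exp r = y / x := by
    rw [hrdef, Real.exp_sub, Real.exp_log hy, Real.exp_log hx]
  have hyx : y = x * Real.exp r := by rw [hey]; field_simp
  have hlxy : Real.log (x/y) = -r := by
    rw [Real.log_div hx.ne' hy.ne', hrdef]; ring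
  rw [hlxy, hyx]
  -- goal: (x - x*e^r)^2 ≤ 2Λ(x*(-r) - x + x*e^r) = 2Λ x (e^r - r - 1)
  have key : x * (Real.exp r - 1)^2 ≤ 2 * Λ * (Real.exp r - r - 1) := by
    rcases le_or_gt r 0 with h | h
    · have hw := w_nonneg h
      have h2 : (Real.exp r - 1)^2 ≤ 2 * (Real.exp r - r - 1) := by
        have h2r : Real.exp (2*r) = Real.exp r * Real.exp r := by rw [two_mul, Real.exp_add]
        nlinarith
      have hnn : (0:ℝ) ≤ (Real.exp r - 1)^2 := sq_nonneg _
      calc x * (Real.exp r - 1)^2 ≤ Λ * (Real.exp r - 1)^2 :=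
            mul_le_mul_of_nonneg_right hxΛ hnn
        _ ≤ Λ * (2 * (Real.exp r - r - 1)) := mul_le_mul_of_nonneg_left h2 hΛ.le
        _ = 2 * Λ * (Real.exp r - r - 1) := by ring
    · -- r > 0 : use x * e^r = y ≤ Λ  and  e^{-r}(e^r-1)^2 ≤ 2(e^r - r - 1) ⟸ r ≤ sinh r
      have hsinh : r ≤ Real.sinh r := Real.self_le_sinh_iff.mpr h.le
      rw [Real.sinh_eq] at hsinh
      have hxer : x * Real.exp r ≤ Λ := by rw [← hyx]; exact hyΛ
      have hepos := Real.exp_pos r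
      have henpos := Real.exp_pos (-r)
      have hee : Real.exp r * Real.exp (-r) = 1 := by
        rw [← Real.exp_add]; simp
      have h2 : Real.exp (-r) * (Real.exp r - 1)^2 ≤ 2 * (Real.exp r - r - 1) := by
        nlinarith
      calc x * (Real.exp r - 1)^2
          = (x * Real.exp r) * (Real.exp (-r) * (Real.exp r - 1)^2) := by
            linear_combination (-(x * (Real.exp r - 1)^2)) * hee
        _ ≤ Λ * (2 * (Real.exp r - r - 1)) := by
            apply mul_le_mul hxer h2 (by positivity) hΛ.le
        _ = 2 * Λ * (Real.exp r - r - 1) := by ring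
  nlinarith [key, hx.le]

/-- Abstract form of Proposition 2 (double inequality): `c₁ TV² ≤ KL ≤ c₂ D²` with
`c₁ = 1/(2τΛ)` and `c₂ = (exp M − M − 1)/M²`, for positive intensities `a`, `b`
bounded by `Λ` on `[0, τ]` whose log-ratio is bounded by `M`. -/
theorem double_inequality
    (τ Λ M : ℝ) (hτ : 0 < τ) (hΛ : 0 < Λ) (hM : 0 < M)
    (a b : ℝ → ℝ) (ha : Measurable a) (hb : Measurable b)
    (hapos : ∀ s ∈ Set.Icc (0:ℝ) τ, 0 < a s ∧ a s ≤ Λ)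
    (hbpos : ∀ s ∈ Set.Icc (0:ℝ) τ, 0 < b s ∧ b s ≤ Λ)
    (hlog : ∀ s ∈ Set.Icc (0:ℝ) τ, |Real.log (b s) - Real.log (a s)| ≤ M) :
    1 / (2 * τ * Λ) * (∫ s in Set.Icc (0:ℝ) τ, |a s - b s|) ^ 2 ≤
        (∫ s in Set.Icc (0:ℝ) τ, (a s * Real.log (a s / b s) - a s + b s)) ∧
      (∫ s in Set.Icc (0:ℝ) τ, (a s * Real.log (a s / b s) - a s + b s)) ≤
        (Real.exp M - M - 1) / M ^ 2 *
          ∫ s in Set.Icc (0:ℝ) τ, (Real.log (b s) - Real.log (a s)) ^ 2 * a s := by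
  set S : Set ℝ := Set.Icc (0:ℝ) τ with hSdef
  have hS : MeasurableSet S := measurableSet_Icc
  have hSvol : volume S ≠ ⊤ := by
    rw [hSdef, Real.volume_Icc]; exact ENNReal.ofReal_ne_top
  set c₂ : ℝ := (Real.exp M - M - 1) / M ^ 2 with hc2
  set φ : ℝ → ℝ := fun s => a s * Real.log (a s / b s) - a s + b s with hφdef
  set ψ : ℝ → ℝ := fun s => (Real.log (b s) - Real.log (a s)) ^ 2 * a s with hψdef
  -- measurability
  have mφ : Measurable φ := ((ha.mul ((ha.div hb).log)).sub ha).add hb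
  have mψ : Measurable ψ := ((hb.log.sub ha.log).pow_const 2).mul ha
  -- generic integrability helper
  have intOn : ∀ (f : ℝ → ℝ) (C : ℝ), Measurable f → (∀ s ∈ S, |f s| ≤ C) →
      IntegrableOn f S := by
    intro f C hf hbd
    refine Measure.integrableOn_of_bounded (M := C) hSvol hf.aestronglyMeasurable ?_
    exact (ae_restrict_iff' hS).mpr (ae_of_all _ fun s hs => by
      simpa [Real.norm_eq_abs] using hbd s hs)
  -- pointwise bounds
  have hφbd : ∀ s ∈ S, |φ s| ≤ Λ * M + 2 * Λ := by
    intro s hs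
    obtain ⟨ha1, ha2⟩ := hapos s hs
    obtain ⟨hb1, hb2⟩ := hbpos s hs
    have hl : Real.log (a s / b s) = Real.log (a s) - Real.log (b s) :=
      Real.log_div ha1.ne' hb1.ne'
    have hlb : |Real.log (a s) - Real.log (b s)| ≤ M := by
      rw [abs_sub_comm]; exact hlog s hs
    rw [abs_le] at hlb
    set l : ℝ := Real.log (a s) - Real.log (b s) with hldef
    have h1 : a s * l ≤ Λ * M := le_trans
      (mul_le_mul_of_nonneg_left hlb.2 ha1.le) (mul_le_mul_of_nonneg_right ha2 hM.le)
    have h2 : -(Λ * M) ≤ a s * l := by nlinarith [hlb.1, hlb.2]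
    simp only [hφdef, hl, ← hldef]
    rw [abs_le]
    constructor <;> nlinarith
  have intφ : IntegrableOn φ S := intOn φ (Λ * M + 2 * Λ) mφ hφbd
  have intψ : IntegrableOn ψ S := by
    refine intOn ψ (M^2 * Λ) mψ fun s hs => ?_
    obtain ⟨ha1, ha2⟩ := hapos s hs
    have hlb := hlog s hs
    simp only [hψdef]
    rw [abs_mul, abs_of_nonneg ha1.le, abs_pow, ← sq_abs]
    apply mul_le_mul _ ha2 ha1.le (by positivity)
    rw [abs_abs]
    exact pow_le_pow_left₀ (abs_nonneg _) hlb 2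
  have intsq : IntegrableOn (fun s => (a s - b s)^2) S := by
    refine intOn _ (4*Λ^2) ((ha.sub hb).pow_const 2) fun s hs => ?_
    obtain ⟨ha1, ha2⟩ := hapos s hs
    obtain ⟨hb1, hb2⟩ := hbpos s hs
    rw [abs_le]; constructor <;> nlinarith
  have intabs : IntegrableOn (fun s => |a s - b s|) S := by
    refine intOn _ (2*Λ) (ha.sub hb).abs fun s hs => ?_
    obtain ⟨ha1, ha2⟩ := hapos s hs
    obtain ⟨hb1, hb2⟩ := hbpos s hs
    rw [abs_abs, abs_le]; constructor <;> nlinarith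
  -- pointwise key inequalities
  have hlow_pt : ∀ s ∈ S, (a s - b s)^2 ≤ 2 * Λ * φ s := fun s hs =>
    pt_lower hΛ (hapos s hs).1 (hapos s hs).2 (hbpos s hs).1 (hbpos s hs).2
  have hup_pt : ∀ s ∈ S, φ s ≤ c₂ * ψ s := by
    intro s hs
    obtain ⟨ha1, ha2⟩ := hapos s hs
    obtain ⟨hb1, hb2⟩ := hbpos s hs
    set r : ℝ := Real.log (b s) - Real.log (a s) with hrdef
    have hrM : r ≤ M := le_trans (le_abs_self r) (hlog s hs)
    have heq : b s = a s * Real.exp r := by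
      rw [hrdef, Real.exp_sub, Real.exp_log hb1, Real.exp_log ha1]; field_simp
    have hl : Real.log (a s / b s) = -r := by
      rw [Real.log_div ha1.ne' hb1.ne', hrdef]; ring
    have hkey := exp_quad_bound hM hrM
    have : a s * (Real.exp r - r - 1) ≤ a s * ((Real.exp M - M - 1) / M ^ 2 * r ^ 2) :=
      mul_le_mul_of_nonneg_left hkey ha1.le
    simp only [hφdef, hψdef, hl, hc2]
    nlinarith [this]
  -- upper bound
  have hupper : (∫ s in S, φ s) ≤ c₂ * ∫ s in S, ψ s := by
    calc (∫ s in S, φ s) ≤ ∫ s in S, c₂ * ψ s :=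
          setIntegral_mono_on intφ (intψ.const_mul c₂) hS hup_pt
      _ = c₂ * ∫ s in S, ψ s := by rw [integral_const_mul]
  -- Cauchy-Schwarz
  have hTVnn : 0 ≤ ∫ s in S, |a s - b s| := setIntegral_nonneg hS fun s _ => abs_nonneg _
  have hAnn : 0 ≤ ∫ s in S, (a s - b s)^2 := setIntegral_nonneg hS fun s _ => sq_nonneg _
  have hCS : (∫ s in S, |a s - b s|)^2 ≤ τ * ∫ s in S, (a s - b s)^2 := by
    have hpq : Real.HolderConjugate 2 2 := Real.HolderConjugate.two_two
    have hmem : MemLp (fun s => |a s - b s|) (ENNReal.ofReal 2) (volume.restrict S) := by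
      refine MemLp.of_bound ((ha.sub hb).abs.aestronglyMeasurable) (2*Λ) ?_
      exact (ae_restrict_iff' hS).mpr (ae_of_all _ fun s hs => by
        obtain ⟨ha1, ha2⟩ := hapos s hs
        obtain ⟨hb1, hb2⟩ := hbpos s hs
        rw [Real.norm_eq_abs, abs_abs, abs_le]; constructor <;> nlinarith)
    have hmem1 : MemLp (fun _ : ℝ => (1:ℝ)) (ENNReal.ofReal 2) (volume.restrict S) :=
      memLp_const 1
    have h := integral_mul_le_Lp_mul_Lq_of_nonneg hpq
      (ae_of_all _ fun s => abs_nonneg (a s - b s)) (ae_of_all _ fun _ => zero_le_one)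
      hmem hmem1
    have hrpow2 : ∀ x : ℝ, x ^ (2:ℝ) = x ^ 2 := fun x => by
      rw [show (2:ℝ) = ((2:ℕ):ℝ) by norm_num, Real.rpow_natCast]
    simp only [mul_one, hrpow2, one_pow] at h
    have hvol : ∫ _ in S, (1:ℝ) = τ := by
      simp [hSdef, Real.volume_Icc, ENNReal.toReal_ofReal hτ.le, hτ.le]
    rw [hvol] at h
    have hsq : ((∫ s in S, (a s - b s)^2) ^ (1/2:ℝ) * τ ^ (1/2:ℝ))^2
        = (∫ s in S, (a s - b s)^2) * τ := by
      rw [mul_pow, ← Real.rpow_natCast (_ ^ (1/2:ℝ)) 2, ← Real.rpow_natCast (τ ^ (1/2:ℝ)) 2,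
        ← Real.rpow_mul hAnn, ← Real.rpow_mul hτ.le]
      norm_num
    have habs2 : (∫ s in S, |a s - b s| ^ 2) = ∫ s in S, (a s - b s)^2 := by
      apply integral_congr_ae (ae_of_all _ fun s => sq_abs _)
    rw [habs2] at h
    calc (∫ s in S, |a s - b s|)^2
        ≤ ((∫ s in S, (a s - b s)^2) ^ (1/2:ℝ) * τ ^ (1/2:ℝ))^2 := by
          apply pow_le_pow_left₀ hTVnn h
      _ = (∫ s in S, (a s - b s)^2) * τ := hsq
      _ = τ * ∫ s in S, (a s - b s)^2 := mul_comm _ _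
  have hA2 : (∫ s in S, (a s - b s)^2) ≤ 2 * Λ * ∫ s in S, φ s := by
    calc (∫ s in S, (a s - b s)^2) ≤ ∫ s in S, 2 * Λ * φ s :=
          setIntegral_mono_on intsq (intφ.const_mul _) hS hlow_pt
      _ = 2 * Λ * ∫ s in S, φ s := by rw [integral_const_mul]
  constructor
  · rw [one_div, inv_mul_le_iff₀ (by positivity), mul_comm]
    calc (∫ s in S, |a s - b s|)^2 ≤ τ * ∫ s in S, (a s - b s)^2 := hCS
      _ ≤ τ * (2 * Λ * ∫ s in S, φ s) := by
          apply mul_le_mul_of_nonneg_left hA2 hτ.le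
      _ = (∫ s in S, φ s) * (2 * τ * Λ) := by ring
  · exact hupper
end

section
/- The function h : ℝ → ℝ defined by h(x) = (exp(x) − x − 1)/x² for x ≠ 0 and h(0) = 1/2 is monotone nondecreasing on ℝ. -/
open Real Set

/-- `exp x ≤ 1 + x + x²/2` for `x ≤ 0`. -/
lemma exp_le_quadratic_of_nonpos {x : ℝ} (hx : x ≤ 0) :
    Real.exp x ≤ 1 + x + x ^ 2 / 2 := by
  have hA : Antitone (fun x : ℝ => 1 + x + x ^ 2 / 2 - Real.exp x) := by
    apply antitone_of_hasDerivAt_nonpos (f' := fun x => 1 + x - Real.exp x)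
    · intro x
      have : HasDerivAt (fun x : ℝ => 1 + x + x ^ 2 / 2 - Real.exp x)
          (0 + 1 + 2 * x ^ 1 * 1 / 2 - Real.exp x) x := by
        exact (((hasDerivAt_const x (1:ℝ)).add (hasDerivAt_id x)).add
          (((hasDerivAt_id x).pow 2).div_const 2)).sub (Real.hasDerivAt_exp x)
      simpa using this
    · intro x
      simp only [Pi.zero_apply]
      have := Real.add_one_le_exp x
      linarith
  have h0 := hA hx
  simp only [Real.exp_zero] at h0
  linarith

lemma g_mono : Monotone (fun x : ℝ => (x - 2) * Real.exp x + x + 2) := by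
  apply monotone_of_hasDerivAt_nonneg (f' := fun x => (x - 1) * Real.exp x + 1)
  · intro x
    have : HasDerivAt (fun x : ℝ => (x - 2) * Real.exp x + x + 2)
        ((1 - 0) * Real.exp x + (x - 2) * Real.exp x + 1 + 0) x := by
      exact ((((hasDerivAt_id x).sub (hasDerivAt_const x 2)).mul (Real.hasDerivAt_exp x)).add
        (hasDerivAt_id x)).add (hasDerivAt_const x 2)
    convert this using 1
    ring
  · intro x
    simp only [Pi.zero_apply]
    rcases le_or_gt 1 x with h | h
    · have := Real.exp_pos x
      nlinarith
    · have h1 : -x + 1 ≤ Real.exp (-x) := Real.add_one_le_exp (-x)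
      have h2 : Real.exp (-x) * Real.exp x = 1 := by
        rw [← Real.exp_add]; simp
      have h3 := Real.exp_pos x
      nlinarith

/-- sign fact: `x * ((x-2)exp x + x + 2) ≥ 0`. -/
lemma g_sign (x : ℝ) : 0 ≤ x * ((x - 2) * Real.exp x + x + 2) := by
  have h0 : ((0:ℝ) - 2) * Real.exp 0 + 0 + 2 = 0 := by simp
  rcases le_or_gt 0 x with h | h
  · have := g_mono h
    simp only at this
    rw [h0] at this
    positivity
  · have := g_mono h.le
    simp only at this
    rw [h0] at this
    nlinarith

lemma q_hasDeriv {x : ℝ} (hx : x ≠ 0) :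
    HasDerivAt (fun x : ℝ => (Real.exp x - x - 1) / x ^ 2)
      (x * ((x - 2) * Real.exp x + x + 2) / (x ^ 2) ^ 2) x := by
  have hnum : HasDerivAt (fun x : ℝ => Real.exp x - x - 1) (Real.exp x - 1 - 0) x :=
    ((Real.hasDerivAt_exp x).sub (hasDerivAt_id x)).sub (hasDerivAt_const x 1)
  have hden : HasDerivAt (fun x : ℝ => x ^ 2) (2 * x ^ 1 * 1) x := (hasDerivAt_id x).pow 2
  have := hnum.div hden (pow_ne_zero 2 hx)
  refine this.congr_deriv ?_
  ring

lemma q_monoOn_Ioi : MonotoneOn (fun x : ℝ => (Real.exp x - x - 1) / x ^ 2) (Ioi 0) := by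
  apply monotoneOn_of_hasDerivWithinAt_nonneg (convex_Ioi 0)
    (f' := fun x => x * ((x - 2) * Real.exp x + x + 2) / (x ^ 2) ^ 2)
  · intro x hx
    exact ((q_hasDeriv (ne_of_gt hx)).continuousAt).continuousWithinAt
  · intro x hx
    rw [interior_Ioi] at hx
    exact (q_hasDeriv (ne_of_gt hx)).hasDerivWithinAt
  · intro x hx
    rw [interior_Ioi] at hx
    have h1 := g_sign x
    have h2 : (0:ℝ) < (x ^ 2) ^ 2 := pow_pos (pow_two_pos_of_ne_zero hx.ne') 2
    exact div_nonneg h1 h2.le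

lemma q_monoOn_Iio : MonotoneOn (fun x : ℝ => (Real.exp x - x - 1) / x ^ 2) (Iio 0) := by
  apply monotoneOn_of_hasDerivWithinAt_nonneg (convex_Iio 0)
    (f' := fun x => x * ((x - 2) * Real.exp x + x + 2) / (x ^ 2) ^ 2)
  · intro x hx
    exact ((q_hasDeriv (ne_of_lt hx)).continuousAt).continuousWithinAt
  · intro x hx
    rw [interior_Iio] at hx
    exact (q_hasDeriv (ne_of_lt hx)).hasDerivWithinAt
  · intro x hx
    rw [interior_Iio] at hx
    have h1 := g_sign x
    have h2 : (0:ℝ) < (x ^ 2) ^ 2 := pow_pos (pow_two_pos_of_ne_zero (ne_of_lt hx)) 2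
    exact div_nonneg h1 h2.le

/-- The continuous extension of `x ↦ (exp x − x − 1)/x²` (with value `1/2` at `0`)
is monotone nondecreasing on `ℝ`. -/
theorem monotone_exp_sub_div_sq :
    Monotone (fun x : ℝ => if x = 0 then 1 / 2 else (Real.exp x - x - 1) / x ^ 2) := by
  set h := fun x : ℝ => if x = 0 then 1 / 2 else (Real.exp x - x - 1) / x ^ 2 with hh
  have hneg : ∀ x < (0:ℝ), h x ≤ 1 / 2 := by
    intro x hx
    have hb := exp_le_quadratic_of_nonpos hx.le
    simp only [hh, if_neg (ne_of_lt hx)]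
    rw [div_le_div_iff₀ (pow_two_pos_of_ne_zero (ne_of_lt hx)) (by norm_num : (0:ℝ) < 2)]
    nlinarith
  have hpos : ∀ x, 0 < x → 1 / 2 ≤ h x := by
    intro x hx
    have hb := Real.quadratic_le_exp_of_nonneg hx.le
    simp only [hh, if_neg (ne_of_gt hx)]
    rw [div_le_div_iff₀ (by norm_num : (0:ℝ) < 2) (by positivity)]
    nlinarith
  intro x y hxy
  rcases lt_trichotomy x 0 with hx | hx | hx
  · rcases lt_trichotomy y 0 with hy | hy | hy
    · have := q_monoOn_Iio hx hy hxy
      simpa only [hh, if_neg (ne_of_lt hx), if_neg (ne_of_lt hy)] using this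
    · subst hy
      simpa only [hh, if_pos rfl] using hneg x hx
    · exact (hneg x hx).trans (hpos y hy)
  · subst hx
    rcases eq_or_lt_of_le hxy with rfl | hy
    · exact le_refl _
    · simpa only [hh, if_pos rfl] using hpos y hy
  · have hy : 0 < y := lt_of_lt_of_le hx hxy
    have := q_monoOn_Ioi hx hy hxy
    simpa only [hh, if_neg (ne_of_gt hx), if_neg (ne_of_gt hy)] using this
end
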